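/- Let $\pg$ be a finite-dimensional inner product space and $\mu_\pg$ an alternating bilinear map with all $\mathrm{ad}_\pg X$ skew-symmetric, invariant under a subgroup $K$ of orthogonal maps. Then the kernel of $\mathrm{Cas}_\pg$ restricted to $K$-invariant symmetric operators equals $\{A\in\mathrm{Sym}(\pg): [A,\mathrm{ad}\,Z|_\pg]=0\ \forall Z\in\kg \text{ and } [A,\mathrm{ad}_\pg X]=0\ \forall X\in\pg\}$; in particular, this kernel equals $\mathbb{R}I$ if and only if there is no nontrivial subspace of $\pg$ invariant under all operators in $\mathrm{ad}\,\kg|_\pg + \mathrm{ad}_\pg\pg$. -/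

import Mathlib

noncomputable section

set_option linter.unusedSectionVars false
set_option linter.unusedVariables false

open RealInnerProductSpace

variable {V : Type*} [NormedAddCommGroup V] [InnerProductSpace ℝ V] [FiniteDimensional ℝ V]

/-- The representation `θ(A)λ = Aλ(·,·) - λ(A·,·) - λ(·,A·)`. -/
def theta (A : Module.End ℝ V) (lam : V → V → V) : V → V → V :=
  fun X Y => A (lam X Y) - lam (A X) Y - lam X (A Y)

/-- The inner product on `Λ²p*⊗p` relative to an orthonormal basis. -/
def bip {ι : Type*} [Fintype ι] (b : OrthonormalBasis ι ℝ V) (f g : V → V → V) : ℝ :=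
  ∑ i, ∑ j, (inner ℝ (f (b i) (b j)) (g (b i) (b j)) : ℝ)

/-- The trace inner product `⟨A,B⟩ = tr(A Bᵗ)` on `gl(p)`. -/
def eip (A B : Module.End ℝ V) : ℝ :=
  LinearMap.trace ℝ V (A ∘ₗ LinearMap.adjoint (B : V →ₗ[ℝ] V))

/-- Commutator of endomorphisms. -/
def opComm (P Q : Module.End ℝ V) : Module.End ℝ V := P ∘ₗ Q - Q ∘ₗ P

/-- `Cas_p(A) = -∑ [ad_p Xᵢ, [ad_p Xᵢ, A]]`. -/
def casOp {ι : Type*} [Fintype ι] (b : OrthonormalBasis ι ℝ V)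
    (μ : V →ₗ[ℝ] V →ₗ[ℝ] V) (A : Module.End ℝ V) : Module.End ℝ V :=
  -∑ i, opComm (μ (b i)) (opComm (μ (b i)) A)

lemma trace_eq_sum_inner' {ι : Type*} [Fintype ι]
    (b : OrthonormalBasis ι ℝ V) (T : Module.End ℝ V) :
    LinearMap.trace ℝ V T = ∑ i, ⟪b i, T (b i)⟫ := by
  classical
  rw [LinearMap.trace_eq_matrix_trace ℝ b.toBasis, Matrix.trace]
  simp [Matrix.diag, LinearMap.toMatrix_apply, b.coe_toBasis_repr_apply,
    b.repr_apply_apply]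

lemma eip_self_eq {ι : Type*} [Fintype ι] (b : OrthonormalBasis ι ℝ V)
    (C : Module.End ℝ V) :
    eip C C = ∑ i, ‖LinearMap.adjoint (C : V →ₗ[ℝ] V) (b i)‖ ^ 2 := by
  rw [eip, trace_eq_sum_inner' b]
  refine Finset.sum_congr rfl fun i _ => ?_
  have : ⟪b i, (C ∘ₗ LinearMap.adjoint (C : V →ₗ[ℝ] V)) (b i)⟫
      = ⟪LinearMap.adjoint (C : V →ₗ[ℝ] V) (b i),
          LinearMap.adjoint (C : V →ₗ[ℝ] V) (b i)⟫ :=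
    (LinearMap.adjoint_inner_left (C : V →ₗ[ℝ] V) _ _).symm
  rw [this, real_inner_self_eq_norm_sq]

lemma eip_self_nonneg {ι : Type*} [Fintype ι] (b : OrthonormalBasis ι ℝ V)
    (C : Module.End ℝ V) : 0 ≤ eip C C := by
  rw [eip_self_eq b]
  exact Finset.sum_nonneg fun i _ => sq_nonneg _

lemma eip_self_eq_zero {ι : Type*} [Fintype ι] (b : OrthonormalBasis ι ℝ V)
    {C : Module.End ℝ V} (h : eip C C = 0) : C = 0 := by
  rw [eip_self_eq b] at h
  have hz : ∀ i, LinearMap.adjoint (C : V →ₗ[ℝ] V) (b i) = 0 := by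
    intro i
    have := (Finset.sum_eq_zero_iff_of_nonneg (fun i _ => sq_nonneg _)).mp h i
      (Finset.mem_univ i)
    have hn : ‖LinearMap.adjoint (C : V →ₗ[ℝ] V) (b i)‖ = 0 := by
      nlinarith [norm_nonneg (LinearMap.adjoint (C : V →ₗ[ℝ] V) (b i))]
    exact norm_eq_zero.mp hn
  have hadj : LinearMap.adjoint (C : V →ₗ[ℝ] V) = 0 :=
    b.toBasis.ext fun i => by simpa using hz i
  have := congrArg LinearMap.adjoint hadj
  rwa [LinearMap.adjoint_adjoint, map_zero] at this

lemma eip_adj (B X Y : Module.End ℝ V) :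
    eip (opComm B X) Y = eip X (opComm (LinearMap.adjoint (B : V →ₗ[ℝ] V)) Y) := by
  simp only [eip, opComm, LinearMap.sub_comp, LinearMap.comp_sub, map_sub,
    LinearMap.adjoint_comp, LinearMap.adjoint_adjoint]
  simp only [← Module.End.mul_eq_comp, mul_assoc]
  congr 1
  rw [LinearMap.trace_mul_comm, mul_assoc]

lemma opComm_neg_left (P Q : Module.End ℝ V) : opComm (-P) Q = -opComm P Q := by
  simp [opComm]; abel

lemma opComm_swap (P Q : Module.End ℝ V) : opComm P Q = -opComm Q P := by
  simp [opComm]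

lemma eip_sum_left {ι : Type*} (s : Finset ι) (f : ι → Module.End ℝ V)
    (Y : Module.End ℝ V) : eip (∑ i ∈ s, f i) Y = ∑ i ∈ s, eip (f i) Y := by
  have hc : (∑ i ∈ s, f i) ∘ₗ LinearMap.adjoint (Y : V →ₗ[ℝ] V)
      = ∑ i ∈ s, ((f i : V →ₗ[ℝ] V) ∘ₗ LinearMap.adjoint (Y : V →ₗ[ℝ] V)) := by
    ext v
    simp [LinearMap.sum_apply]
  rw [eip, hc, map_sum]
  rfl

lemma eip_neg_left (X Y : Module.End ℝ V) : eip (-X) Y = -eip X Y := by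
  simp [eip]

lemma eip_neg_right (X Y : Module.End ℝ V) : eip X (-Y) = -eip X Y := by
  simp [eip, LinearMap.comp_neg]

/-- Key equivalence: for any `A`, `Cas_p A = 0` iff `A` commutes with all `ad_p X`. -/
lemma cas_zero_iff {ι : Type*} [Fintype ι] (b : OrthonormalBasis ι ℝ V)
    (μ : V →ₗ[ℝ] V →ₗ[ℝ] V)
    (hskew : ∀ X : V, LinearMap.adjoint (μ X) = -(μ X)) (A : Module.End ℝ V) :
    casOp b μ A = 0 ↔ ∀ X : V, opComm A (μ X) = 0 := by
  constructor
  · intro h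
    have hkey : ∑ i, eip (opComm (μ (b i)) A) (opComm (μ (b i)) A) = 0 := by
      have h0 : eip (casOp b μ A) A = 0 := by
        rw [h]; simp [eip]
      rw [casOp, eip_neg_left, eip_sum_left] at h0
      have : ∀ i, eip (opComm (μ (b i)) (opComm (μ (b i)) A)) A
          = -eip (opComm (μ (b i)) A) (opComm (μ (b i)) A) := by
        intro i
        rw [eip_adj, hskew, opComm_neg_left, eip_neg_right]
      rw [Finset.sum_congr rfl fun i _ => this i] at h0
      rw [Finset.sum_neg_distrib, neg_neg] at h0
      exact h0
    have hbasis : ∀ i, opComm (μ (b i)) A = 0 := by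
      intro i
      refine eip_self_eq_zero b ?_
      have := (Finset.sum_eq_zero_iff_of_nonneg
        (fun i _ => eip_self_nonneg b (opComm (μ (b i)) A))).mp hkey i (Finset.mem_univ i)
      exact this
    -- extend from basis to all `X`
    intro X
    let φ : V →ₗ[ℝ] Module.End ℝ V :=
      { toFun := fun X => opComm A (μ X)
        map_add' := fun x y => by simp [opComm, LinearMap.comp_add, LinearMap.add_comp]; abel
        map_smul' := fun c x => by
          simp [opComm, LinearMap.comp_smul, LinearMap.smul_comp, smul_sub] }
    have hφ : φ = 0 := b.toBasis.ext fun i => by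
      have h0 : opComm A (μ (b i)) = 0 := by rw [opComm_swap, hbasis i, neg_zero]
      simpa [φ] using h0
    have := congrFun (congrArg DFunLike.coe hφ) X
    simpa [φ] using this
  · intro h
    have : ∀ i, opComm (μ (b i)) A = 0 := by
      intro i
      rw [opComm_swap, h (b i), neg_zero]
    simp only [casOp]
    rw [Finset.sum_congr rfl fun i _ => by rw [this i]]
    simp [opComm]

lemma skew_preserves_orth (W : Submodule ℝ V) (T : Module.End ℝ V)
    (hadj : LinearMap.adjoint (T : V →ₗ[ℝ] V) = -(T : V →ₗ[ℝ] V))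
    (h1 : ∀ x ∈ W, T x ∈ W) : ∀ x ∈ Wᗮ, T x ∈ Wᗮ := by
  intro x hx
  rw [Submodule.mem_orthogonal]
  intro u hu
  have h2 : ⟪LinearMap.adjoint (T : V →ₗ[ℝ] V) u, x⟫ = ⟪u, T x⟫ :=
    LinearMap.adjoint_inner_left _ _ _
  rw [hadj] at h2
  rw [← h2]
  simp only [LinearMap.neg_apply, inner_neg_left]
  rw [(Submodule.mem_orthogonal _ _).mp hx (T u) (h1 u hu), neg_zero]

lemma proj_comm (W : Submodule ℝ V) (T : Module.End ℝ V)
    (h1 : ∀ x ∈ W, T x ∈ W) (h2 : ∀ x ∈ Wᗮ, T x ∈ Wᗮ) :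
    opComm (W.subtypeL ∘L W.orthogonalProjectionOnto : V →ₗ[ℝ] V) T = 0 := by
  set P : Module.End ℝ V := (W.subtypeL ∘L W.orthogonalProjectionOnto : V →ₗ[ℝ] V) with hPdef
  have hPapp : ∀ x : V, P x = (W.orthogonalProjectionOnto x : V) := fun x => rfl
  have hPW : ∀ y ∈ W, P y = y := fun y hy => by
    rw [hPapp]; exact Submodule.starProjection_eq_self_iff.mpr hy
  have hPO : ∀ y ∈ Wᗮ, P y = 0 := fun y hy => by
    rw [hPapp, Submodule.orthogonalProjectionOnto_apply_of_mem_orthogonal hy,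
      Submodule.coe_zero]
  rw [opComm, sub_eq_zero]
  ext x
  have hpW : P x ∈ W := by rw [hPapp]; exact Submodule.coe_mem _
  have hq : x - P x ∈ Wᗮ := by
    rw [hPapp]; exact Submodule.sub_starProjection_mem_orthogonal x
  have hsplit : T x = T (P x) + T (x - P x) := by rw [map_sub]; abel
  simp only [LinearMap.comp_apply]
  rw [hsplit, map_add, hPW _ (h1 _ hpW), hPO _ (h2 _ hq), add_zero]

/-- the kernel of `Cas_p` on `K`-invariant symmetric operators is the set
of symmetric operators commuting with the isotropy action `S = ad k|_p` and with all
`ad_p X`; it equals `ℝ I` iff `p` has no nontrivial subspace invariant under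
`ad k|_p + ad_p p`. -/
theorem statement17 {n : ℕ} (b : OrthonormalBasis (Fin n) ℝ V)
    (μ : V →ₗ[ℝ] V →ₗ[ℝ] V) (halt : ∀ X, μ X X = 0)
    (hskew : ∀ X : V, LinearMap.adjoint (μ X) = -(μ X))
    (S : Set (Module.End ℝ V))
    (hSskew : ∀ Z ∈ S, LinearMap.adjoint (Z : V →ₗ[ℝ] V) = -(Z : V →ₗ[ℝ] V))
    -- each `Z ∈ S` acts as a derivation of `μ` (K-invariance of the bracket)
    (hSder : ∀ Z ∈ S, ∀ X Y : V, Z (μ X Y) = μ (Z X) Y + μ X (Z Y)) :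
    ({A : Module.End ℝ V | LinearMap.IsSymmetric (A : V →ₗ[ℝ] V) ∧
        (∀ Z ∈ S, opComm A Z = 0) ∧ casOp b μ A = 0} =
      {A : Module.End ℝ V | LinearMap.IsSymmetric (A : V →ₗ[ℝ] V) ∧
        (∀ Z ∈ S, opComm A Z = 0) ∧ ∀ X : V, opComm A (μ X) = 0}) ∧
    (({A : Module.End ℝ V | LinearMap.IsSymmetric (A : V →ₗ[ℝ] V) ∧
        (∀ Z ∈ S, opComm A Z = 0) ∧ casOp b μ A = 0} =
          {A : Module.End ℝ V | ∃ c : ℝ, A = c • (1 : Module.End ℝ V)}) ↔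
      (∀ W : Submodule ℝ V, (∀ Z ∈ S, ∀ x ∈ W, Z x ∈ W) →
        (∀ X : V, ∀ x ∈ W, μ X x ∈ W) → W = ⊥ ∨ W = ⊤)) := by
  
  have hpart1 : ({A : Module.End ℝ V | LinearMap.IsSymmetric (A : V →ₗ[ℝ] V) ∧
        (∀ Z ∈ S, opComm A Z = 0) ∧ casOp b μ A = 0} =
      {A : Module.End ℝ V | LinearMap.IsSymmetric (A : V →ₗ[ℝ] V) ∧
        (∀ Z ∈ S, opComm A Z = 0) ∧ ∀ X : V, opComm A (μ X) = 0}) := by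
    ext A
    simp only [Set.mem_setOf_eq]
    exact ⟨fun ⟨h1, h2, h3⟩ => ⟨h1, h2, (cas_zero_iff b μ hskew A).mp h3⟩,
      fun ⟨h1, h2, h3⟩ => ⟨h1, h2, (cas_zero_iff b μ hskew A).mpr h3⟩⟩
  refine ⟨hpart1, ?_⟩
  rw [hpart1]
  constructor
  · intro heq W hWS hWμ
    by_cases hbot : W = ⊥
    · exact Or.inl hbot
    right
    set P : Module.End ℝ V := (W.subtypeL ∘L W.orthogonalProjectionOnto : V →ₗ[ℝ] V) with hPdef
    have hsymP : LinearMap.IsSymmetric (P : V →ₗ[ℝ] V) := Submodule.starProjection_isSymmetric W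
    have hScomm : ∀ Z ∈ S, opComm P Z = 0 := fun Z hZ =>
      proj_comm W Z (hWS Z hZ) (skew_preserves_orth W Z (hSskew Z hZ) (hWS Z hZ))
    have hμcomm : ∀ X : V, opComm P (μ X) = 0 := fun X =>
      proj_comm W (μ X) (hWμ X) (skew_preserves_orth W (μ X) (hskew X) (hWμ X))
    have hmem : P ∈ {A : Module.End ℝ V | LinearMap.IsSymmetric (A : V →ₗ[ℝ] V) ∧
        (∀ Z ∈ S, opComm A Z = 0) ∧ ∀ X : V, opComm A (μ X) = 0} :=
      ⟨hsymP, hScomm, hμcomm⟩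
    rw [heq] at hmem
    obtain ⟨c, hc⟩ := hmem
    obtain ⟨w, hwW, hw0⟩ := (Submodule.ne_bot_iff W).mp hbot
    have hPw : P w = w := Submodule.starProjection_eq_self_iff.mpr hwW
    have hcw : c • w = w := by
      have := hPw; rw [hc] at this; simpa using this
    have hc1 : c = 1 := by
      have h' : (c - 1) • w = 0 := by rw [sub_smul, one_smul, hcw, sub_self]
      rcases smul_eq_zero.mp h' with h | h
      · exact sub_eq_zero.mp h
      · exact absurd h hw0
    rw [Submodule.eq_top_iff']
    intro x
    have hx : P x = x := by rw [hc, hc1]; simp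
    rw [← hx]
    exact Submodule.coe_mem _
  · intro hirr
    ext A
    simp only [Set.mem_setOf_eq]
    constructor
    · rintro ⟨hsym, hS, hμA⟩
      have htop : (⨆ c : ℝ, Module.End.eigenspace (A : V →ₗ[ℝ] V) c) = ⊤ :=
        Submodule.orthogonal_eq_bot_iff.mp hsym.orthogonalComplement_iSup_eigenspaces_eq_bot
      have hinv : ∀ c : ℝ, Module.End.eigenspace (A : V →ₗ[ℝ] V) c = ⊥ ∨
          Module.End.eigenspace (A : V →ₗ[ℝ] V) c = ⊤ := by
        intro c
        refine hirr _ ?_ ?_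
        · intro Z hZ x hx
          rw [Module.End.mem_eigenspace_iff] at hx ⊢
          have hcomm : A ∘ₗ Z = Z ∘ₗ A := sub_eq_zero.mp (hS Z hZ)
          calc A (Z x) = (A ∘ₗ Z) x := rfl
            _ = Z (A x) := by rw [hcomm]; rfl
            _ = c • Z x := by rw [hx, map_smul]
        · intro X x hx
          rw [Module.End.mem_eigenspace_iff] at hx ⊢
          have hcomm : A ∘ₗ μ X = μ X ∘ₗ A := sub_eq_zero.mp (hμA X)
          calc A (μ X x) = (A ∘ₗ μ X) x := rfl
            _ = μ X (A x) := by rw [hcomm]; rfl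
            _ = c • μ X x := by rw [hx, map_smul]
      by_cases hex : ∃ c : ℝ, Module.End.eigenspace (A : V →ₗ[ℝ] V) c = ⊤
      · obtain ⟨c, hc⟩ := hex
        refine ⟨c, ?_⟩
        ext x
        have hx : x ∈ Module.End.eigenspace (A : V →ₗ[ℝ] V) c :=
          hc ▸ Submodule.mem_top
        rw [Module.End.mem_eigenspace_iff] at hx
        simpa using hx
      · push_neg at hex
        have hallbot : ∀ c, Module.End.eigenspace (A : V →ₗ[ℝ] V) c = ⊥ :=
          fun c => (hinv c).resolve_right (hex c)
        have hTB : (⊤ : Submodule ℝ V) = ⊥ := by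
          rw [← htop]; simp [hallbot]
        have hzero : ∀ x : V, x = 0 := fun x =>
          (Submodule.mem_bot ℝ).mp (hTB ▸ (Submodule.mem_top : x ∈ ⊤))
        refine ⟨0, ?_⟩
        ext x
        rw [hzero (A x)]
        simp
    · rintro ⟨c, rfl⟩
      refine ⟨?_, ?_, ?_⟩
      · intro x y
        simp [inner_smul_left, inner_smul_right]
      · intro Z hZ
        simp only [opComm, LinearMap.smul_comp, LinearMap.comp_smul,
          Module.End.one_eq_id, LinearMap.id_comp, LinearMap.comp_id, sub_self]
      · intro X
        simp only [opComm, LinearMap.smul_comp, LinearMap.comp_smul,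
          Module.End.one_eq_id, LinearMap.id_comp, LinearMap.comp_id, sub_self]
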